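/- For all 2×2 complex matrices A and B and all θ ∈ (0,π), φ ∈ ℝ, the cosine bracket equals the inverse-metric form on the sphere: Q_{AB+BA}(θ,φ) = 4π·( Q_A·Q_B + ∂Q_A/∂θ · ∂Q_B/∂θ + (1/sin²θ)·∂Q_A/∂φ · ∂Q_B/∂φ ). -/

import Mathlib

open Matrix Complex Real MeasureTheory

noncomputable section

/-- The spin coherent state |θ,φ⟩ = cos(θ/2)|0⟩ + e^{iφ} sin(θ/2)|1⟩. -/
def cohVec (θ φ : ℝ) : Fin 2 → ℂ :=
  ![((Real.cos (θ / 2) : ℝ) : ℂ),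
    Complex.exp (Complex.I * (φ : ℂ)) * ((Real.sin (θ / 2) : ℝ) : ℂ)]

/-- The Husimi Q function of a 2×2 complex matrix. -/
def Qfun (A : Matrix (Fin 2) (Fin 2) ℂ) (θ φ : ℝ) : ℂ :=
  (1 / (2 * Real.pi) : ℂ) *
    ∑ k, ∑ l, (starRingEnd ℂ) (cohVec θ φ k) * A k l * cohVec θ φ l

/-- ∂Q_A/∂θ. -/
def Qθ (A : Matrix (Fin 2) (Fin 2) ℂ) (θ φ : ℝ) : ℂ :=
  deriv (fun t => Qfun A t φ) θ

/-- ∂Q_A/∂φ. -/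
def Qφ (A : Matrix (Fin 2) (Fin 2) ℂ) (θ φ : ℝ) : ℂ :=
  deriv (fun p => Qfun A θ p) φ

lemma Qfun_eq (A : Matrix (Fin 2) (Fin 2) ℂ) (θ φ : ℝ) :
    Qfun A θ φ = (1 / (2 * Real.pi) : ℂ) *
      (A 0 0 * ((Real.cos (θ/2) : ℝ) : ℂ)^2
       + A 0 1 * Complex.exp (Complex.I * (φ:ℂ)) *
           (((Real.cos (θ/2) : ℝ) : ℂ) * ((Real.sin (θ/2) : ℝ) : ℂ))
       + A 1 0 * Complex.exp (-(Complex.I * (φ:ℂ))) *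
           (((Real.cos (θ/2) : ℝ) : ℂ) * ((Real.sin (θ/2) : ℝ) : ℂ))
       + A 1 1 * ((Real.sin (θ/2) : ℝ) : ℂ)^2) := by
  simp only [Qfun, cohVec, Fin.sum_univ_two, Matrix.cons_val_zero, Matrix.cons_val_one,
    Matrix.head_cons, _root_.map_mul, Complex.conj_ofReal, ← Complex.exp_conj, Complex.conj_I,
    neg_mul]
  linear_combination (((Real.pi:ℝ):ℂ))⁻¹ * ((Real.sin (θ/2) : ℝ) : ℂ)^2 * A 1 1 * (1/2) * (by rw [← Complex.exp_add]; simp : Complex.exp (Complex.I * (φ:ℂ)) * Complex.exp (-(Complex.I * (φ:ℂ))) = 1)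

lemma expIφ_mul (φ : ℝ) : Complex.exp (Complex.I * (φ:ℂ)) * Complex.exp (-(Complex.I * (φ:ℂ))) = 1 := by
  rw [← Complex.exp_add]; simp

lemma Qθ_eq (A : Matrix (Fin 2) (Fin 2) ℂ) (θ φ : ℝ) :
    Qθ A θ φ = (1 / (2 * Real.pi) : ℂ) *
      (-(A 0 0) * (((Real.cos (θ/2) : ℝ) : ℂ) * ((Real.sin (θ/2) : ℝ) : ℂ))
       + A 0 1 * Complex.exp (Complex.I * (φ:ℂ)) *
           ((((Real.cos (θ/2) : ℝ) : ℂ)^2 - ((Real.sin (θ/2) : ℝ) : ℂ)^2) / 2)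
       + A 1 0 * Complex.exp (-(Complex.I * (φ:ℂ))) *
           ((((Real.cos (θ/2) : ℝ) : ℂ)^2 - ((Real.sin (θ/2) : ℝ) : ℂ)^2) / 2)
       + A 1 1 * (((Real.cos (θ/2) : ℝ) : ℂ) * ((Real.sin (θ/2) : ℝ) : ℂ))) := by
  have hc : HasDerivAt (fun t : ℝ => ((Real.cos (t/2) : ℝ) : ℂ))
      ((-Real.sin (θ/2) * (1/2) : ℝ) : ℂ) θ :=
    HasDerivAt.ofReal_comp (by have := (Real.hasDerivAt_cos (θ/2)).comp θ ((hasDerivAt_id θ).div_const 2); exact this)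
  have hs : HasDerivAt (fun t : ℝ => ((Real.sin (t/2) : ℝ) : ℂ))
      ((Real.cos (θ/2) * (1/2) : ℝ) : ℂ) θ :=
    HasDerivAt.ofReal_comp (by have := (Real.hasDerivAt_sin (θ/2)).comp θ ((hasDerivAt_id θ).div_const 2); exact this)
  have h := ((((((hc.mul hc)).const_mul (A 0 0)).add
      ((hc.mul hs).const_mul (A 0 1 * Complex.exp (Complex.I * (φ:ℂ))))).add
      ((hc.mul hs).const_mul (A 1 0 * Complex.exp (-(Complex.I * (φ:ℂ)))))).add
      ((hs.mul hs).const_mul (A 1 1))).const_mul ((1 / (2 * Real.pi) : ℂ))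
  have hfun : (fun t => Qfun A t φ) = (fun t : ℝ => (1 / (2 * Real.pi) : ℂ) *
      (A 0 0 * (((Real.cos (t/2) : ℝ) : ℂ) * ((Real.cos (t/2) : ℝ) : ℂ))
       + A 0 1 * Complex.exp (Complex.I * (φ:ℂ)) *
           (((Real.cos (t/2) : ℝ) : ℂ) * ((Real.sin (t/2) : ℝ) : ℂ))
       + A 1 0 * Complex.exp (-(Complex.I * (φ:ℂ))) *
           (((Real.cos (t/2) : ℝ) : ℂ) * ((Real.sin (t/2) : ℝ) : ℂ))
       + A 1 1 * (((Real.sin (t/2) : ℝ) : ℂ) * ((Real.sin (t/2) : ℝ) : ℂ)))) :=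
    funext fun t => by rw [Qfun_eq]; ring
  rw [Qθ, hfun]; refine h.deriv.trans ?_
  push_cast
  ring

lemma Qφ_eq (A : Matrix (Fin 2) (Fin 2) ℂ) (θ φ : ℝ) :
    Qφ A θ φ = (1 / (2 * Real.pi) : ℂ) * Complex.I *
      (A 0 1 * Complex.exp (Complex.I * (φ:ℂ)) *
           (((Real.cos (θ/2) : ℝ) : ℂ) * ((Real.sin (θ/2) : ℝ) : ℂ))
       - A 1 0 * Complex.exp (-(Complex.I * (φ:ℂ))) *
           (((Real.cos (θ/2) : ℝ) : ℂ) * ((Real.sin (θ/2) : ℝ) : ℂ))) := by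
  have hE : HasDerivAt (fun p : ℝ => Complex.exp (Complex.I * (p:ℂ)))
      (Complex.exp (Complex.I * (φ:ℂ)) * (Complex.I * 1)) φ :=
    HasDerivAt.comp_ofReal ((Complex.hasDerivAt_exp (Complex.I * (φ:ℂ))).comp (φ:ℂ)
      ((hasDerivAt_id ((φ:ℝ):ℂ)).const_mul Complex.I))
  have hF : HasDerivAt (fun p : ℝ => Complex.exp (-(Complex.I * (p:ℂ))))
      (Complex.exp (-(Complex.I * (φ:ℂ))) * (-(Complex.I * 1))) φ :=
    HasDerivAt.comp_ofReal ((Complex.hasDerivAt_exp (-(Complex.I * (φ:ℂ)))).comp (φ:ℂ)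
      (((hasDerivAt_id ((φ:ℝ):ℂ)).const_mul Complex.I).neg))
  have h := ((((hasDerivAt_const φ (A 0 0 * ((Real.cos (θ/2) : ℝ) : ℂ)^2)).add
      ((hE.const_mul (A 0 1)).mul_const
        (((Real.cos (θ/2) : ℝ) : ℂ) * ((Real.sin (θ/2) : ℝ) : ℂ)))).add
      ((hF.const_mul (A 1 0)).mul_const
        (((Real.cos (θ/2) : ℝ) : ℂ) * ((Real.sin (θ/2) : ℝ) : ℂ)))).add
      (hasDerivAt_const φ (A 1 1 * ((Real.sin (θ/2) : ℝ) : ℂ)^2))).const_mul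
      ((1 / (2 * Real.pi) : ℂ))
  have hfun : (fun p => Qfun A θ p) = (fun p : ℝ => (1 / (2 * Real.pi) : ℂ) *
      (A 0 0 * ((Real.cos (θ/2) : ℝ) : ℂ)^2
       + A 0 1 * Complex.exp (Complex.I * (p:ℂ)) *
           (((Real.cos (θ/2) : ℝ) : ℂ) * ((Real.sin (θ/2) : ℝ) : ℂ))
       + A 1 0 * Complex.exp (-(Complex.I * (p:ℂ))) *
           (((Real.cos (θ/2) : ℝ) : ℂ) * ((Real.sin (θ/2) : ℝ) : ℂ))
       + A 1 1 * ((Real.sin (θ/2) : ℝ) : ℂ)^2)) := funext fun p => Qfun_eq A θ p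
  rw [Qφ, hfun]; refine h.deriv.trans ?_
  ring

/-- the cosine bracket equals the inverse-metric form on the sphere. -/
theorem cosine_bracket_inverse_metric_form (A B : Matrix (Fin 2) (Fin 2) ℂ)
    (θ φ : ℝ) (hθ : θ ∈ Set.Ioo (0 : ℝ) Real.pi) :
    Qfun (A * B + B * A) θ φ =
      (4 * Real.pi : ℂ) *
        (Qfun A θ φ * Qfun B θ φ + Qθ A θ φ * Qθ B θ φ
          + ((1 / (Real.sin θ) ^ 2 : ℝ) : ℂ) * Qφ A θ φ * Qφ B θ φ) := by
  obtain ⟨h0, hπ⟩ := hθ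
  have h2 : 0 < θ / 2 := by linarith
  have h2' : θ / 2 < Real.pi / 2 := by linarith
  have hsR : 0 < Real.sin (θ / 2) :=
    Real.sin_pos_of_pos_of_lt_pi h2 (by linarith [Real.pi_pos])
  have hcR : 0 < Real.cos (θ / 2) :=
    Real.cos_pos_of_mem_Ioo ⟨by linarith [Real.pi_pos], h2'⟩
  have hs0 : ((Real.sin (θ / 2) : ℝ) : ℂ) ≠ 0 := by exact_mod_cast hsR.ne'
  have hc0 : ((Real.cos (θ / 2) : ℝ) : ℂ) ≠ 0 := by exact_mod_cast hcR.ne'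
  have hp0 : ((Real.pi : ℝ) : ℂ) ≠ 0 := by exact_mod_cast Real.pi_ne_zero
  have hsinθ : ((Real.sin θ : ℝ) : ℂ) =
      2 * ((Real.sin (θ / 2) : ℝ) : ℂ) * ((Real.cos (θ / 2) : ℝ) : ℂ) := by
    have : Real.sin θ = 2 * Real.sin (θ / 2) * Real.cos (θ / 2) := by
      rw [show θ = 2 * (θ / 2) by ring, Real.sin_two_mul]
      ring_nf
    rw [this]; push_cast; ring
  have hEF := expIφ_mul φ
  have hcs : ((Real.cos (θ / 2) : ℝ) : ℂ)^2 + ((Real.sin (θ / 2) : ℝ) : ℂ)^2 = 1 := by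
    have := Real.cos_sq_add_sin_sq (θ / 2)
    exact_mod_cast congrArg (fun x : ℝ => (x : ℂ)) this
  have hfrac : ((1 / (Real.sin θ) ^ 2 : ℝ) : ℂ) =
      1 / (2 * ((Real.sin (θ / 2) : ℝ) : ℂ) * ((Real.cos (θ / 2) : ℝ) : ℂ)) ^ 2 := by
    rw [Complex.ofReal_div, Complex.ofReal_pow, Complex.ofReal_one, hsinθ]
  have hdiv : ((1 / (Real.sin θ) ^ 2 : ℝ) : ℂ) * Qφ A θ φ * Qφ B θ φ =
      (1 / (2 * Real.pi) : ℂ)^2 * (-(1/4)) *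
        (A 0 1 * Complex.exp (Complex.I * (φ:ℂ)) - A 1 0 * Complex.exp (-(Complex.I * (φ:ℂ)))) *
        (B 0 1 * Complex.exp (Complex.I * (φ:ℂ)) - B 1 0 * Complex.exp (-(Complex.I * (φ:ℂ)))) := by
    have hne : ((2 * ((Real.sin (θ / 2) : ℝ) : ℂ) * ((Real.cos (θ / 2) : ℝ) : ℂ)) ^ 2) ≠ 0 :=
      pow_ne_zero _ (mul_ne_zero (mul_ne_zero two_ne_zero hs0) hc0)
    rw [Qφ_eq, Qφ_eq, hfrac, one_div_mul_eq_div, div_mul_eq_mul_div, div_eq_iff hne]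
    linear_combination ((1 / (2 * ((Real.pi : ℝ) : ℂ)))^2 * ((Real.cos (θ / 2) : ℝ) : ℂ)^2 *
      ((Real.sin (θ / 2) : ℝ) : ℂ)^2 *
      (A 0 1 * Complex.exp (Complex.I * (φ:ℂ)) - A 1 0 * Complex.exp (-(Complex.I * (φ:ℂ)))) *
      (B 0 1 * Complex.exp (Complex.I * (φ:ℂ)) - B 1 0 * Complex.exp (-(Complex.I * (φ:ℂ))))) *
      Complex.I_sq
  rw [hdiv, Qfun_eq, Qfun_eq, Qfun_eq, Qθ_eq, Qθ_eq]
  simp only [Matrix.add_apply, Matrix.mul_apply, Fin.sum_univ_two]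
  have hpu : ((Real.pi : ℝ) : ℂ) * (((Real.pi : ℝ) : ℂ))⁻¹ = 1 := mul_inv_cancel₀ hp0
  linear_combination
    ((-1 : ℂ) * A 1 1 * B 1 1 * ((Real.sin (θ / 2) : ℝ) : ℂ)^4 * (((Real.pi : ℝ) : ℂ))⁻¹ + (-1 : ℂ) * A 1 1 * B 1 1 * ((Real.cos (θ / 2) : ℝ) : ℂ)^2 * ((Real.sin (θ / 2) : ℝ) : ℂ)^2 * (((Real.pi : ℝ) : ℂ))⁻¹ + (-1/2 : ℂ) * A 1 1 * B 1 0 * ((Real.cos (θ / 2) : ℝ) : ℂ) * ((Real.sin (θ / 2) : ℝ) : ℂ)^3 * Complex.exp (-(Complex.I * (φ:ℂ))) * (((Real.pi : ℝ) : ℂ))⁻¹ + (-1/2 : ℂ) * A 1 1 * B 1 0 * ((Real.cos (θ / 2) : ℝ) : ℂ)^3 * ((Real.sin (θ / 2) : ℝ) : ℂ) * Complex.exp (-(Complex.I * (φ:ℂ))) * (((Real.pi : ℝ) : ℂ))⁻¹ + (-1/2 : ℂ) * A 1 1 * B 0 1 * ((Real.cos (θ / 2) : ℝ) : ℂ) *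 ((Real.sin (θ / 2) : ℝ) : ℂ)^3 * Complex.exp (Complex.I * (φ:ℂ)) * (((Real.pi : ℝ) : ℂ))⁻¹ + (-1/2 : ℂ) * A 1 1 * B 0 1 * ((Real.cos (θ / 2) : ℝ) : ℂ)^3 * ((Real.sin (θ / 2) : ℝ) : ℂ) * Complex.exp (Complex.I * (φ:ℂ)) * (((Real.pi : ℝ) : ℂ))⁻¹ + (-1/2 : ℂ) * A 1 0 * B 1 1 * ((Real.cos (θ / 2) : ℝ) : ℂ) * ((Real.sin (θ / 2) : ℝ) : ℂ)^3 * Complex.exp (-(Complex.I * (φ:ℂ))) * (((Real.pi : ℝ) : ℂ))⁻¹ + (-1/2 : ℂ) * A 1 0 * B 1 1 * ((Real.cos (θ / 2) : ℝ) : ℂ)^3 * ((Real.sin (θ / 2) : ℝ) : ℂ) * Complex.exp (-(Complex.I * (φ:ℂ))) * (((Real.pi : ℝ) : ℂ))⁻¹ + (1/4 : ℂ) * A 1 0 * B 1 0 * Complex.exp (-(Complex.I * (φ:ℂ)))^2 * (((Real.pi : ℝ) : ℂ))⁻¹ + (-1/4 : ℂ) * A 1 0 * B 1 0 * ((Real.sin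 (θ / 2) : ℝ) : ℂ)^4 * Complex.exp (-(Complex.I * (φ:ℂ)))^2 * (((Real.pi : ℝ) : ℂ))⁻¹ + (-1/2 : ℂ) * A 1 0 * B 1 0 * ((Real.cos (θ / 2) : ℝ) : ℂ)^2 * ((Real.sin (θ / 2) : ℝ) : ℂ)^2 * Complex.exp (-(Complex.I * (φ:ℂ)))^2 * (((Real.pi : ℝ) : ℂ))⁻¹ + (-1/4 : ℂ) * A 1 0 * B 1 0 * ((Real.cos (θ / 2) : ℝ) : ℂ)^4 * Complex.exp (-(Complex.I * (φ:ℂ)))^2 * (((Real.pi : ℝ) : ℂ))⁻¹ + (-1/4 : ℂ) * A 1 0 * B 0 1 * Complex.exp (Complex.I * (φ:ℂ)) * Complex.exp (-(Complex.I * (φ:ℂ))) * (((Real.pi : ℝ) : ℂ))⁻¹ + (-1/4 : ℂ) * A 1 0 * B 0 1 * ((Real.sin (θ / 2) : ℝ) : ℂ)^4 * Complex.exp (Complex.I * (φ:ℂ)) * Complex.exp (-(Complex.I * (φ:ℂ))) * (((Real.pi : ℝ) : ℂ))⁻¹ + (-1/2 : ℂ) * A 1 0 * B 0 1 * ((Real.cos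 (θ / 2) : ℝ) : ℂ)^2 * ((Real.sin (θ / 2) : ℝ) : ℂ)^2 * Complex.exp (Complex.I * (φ:ℂ)) * Complex.exp (-(Complex.I * (φ:ℂ))) * (((Real.pi : ℝ) : ℂ))⁻¹ + (-1/4 : ℂ) * A 1 0 * B 0 1 * ((Real.cos (θ / 2) : ℝ) : ℂ)^4 * Complex.exp (Complex.I * (φ:ℂ)) * Complex.exp (-(Complex.I * (φ:ℂ))) * (((Real.pi : ℝ) : ℂ))⁻¹ + (-1/2 : ℂ) * A 1 0 * B 0 0 * ((Real.cos (θ / 2) : ℝ) : ℂ) * ((Real.sin (θ / 2) : ℝ) : ℂ)^3 * Complex.exp (-(Complex.I * (φ:ℂ))) * (((Real.pi : ℝ) : ℂ))⁻¹ + (-1/2 : ℂ) * A 1 0 * B 0 0 * ((Real.cos (θ / 2) : ℝ) : ℂ)^3 * ((Real.sin (θ / 2) : ℝ) : ℂ) * Complex.exp (-(Complex.I * (φ:ℂ))) * (((Real.pi : ℝ) : ℂ))⁻¹ + (-1/2 : ℂ) * A 0 1 * B 1 1 * ((Real.cos (θ / 2) : ℝ) : ℂ) * ((Real.sin (θ /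 2) : ℝ) : ℂ)^3 * Complex.exp (Complex.I * (φ:ℂ)) * (((Real.pi : ℝ) : ℂ))⁻¹ + (-1/2 : ℂ) * A 0 1 * B 1 1 * ((Real.cos (θ / 2) : ℝ) : ℂ)^3 * ((Real.sin (θ / 2) : ℝ) : ℂ) * Complex.exp (Complex.I * (φ:ℂ)) * (((Real.pi : ℝ) : ℂ))⁻¹ + (-1/4 : ℂ) * A 0 1 * B 1 0 * Complex.exp (Complex.I * (φ:ℂ)) * Complex.exp (-(Complex.I * (φ:ℂ))) * (((Real.pi : ℝ) : ℂ))⁻¹ + (-1/4 : ℂ) * A 0 1 * B 1 0 * ((Real.sin (θ / 2) : ℝ) : ℂ)^4 * Complex.exp (Complex.I * (φ:ℂ)) * Complex.exp (-(Complex.I * (φ:ℂ))) * (((Real.pi : ℝ) : ℂ))⁻¹ + (-1/2 : ℂ) * A 0 1 * B 1 0 * ((Real.cos (θ / 2) : ℝ) : ℂ)^2 * ((Real.sin (θ / 2) : ℝ) : ℂ)^2 * Complex.exp (Complex.I * (φ:ℂ)) * Complex.exp (-(Complex.I * (φ:ℂ))) * (((Real.pi : ℝ) : ℂ))⁻¹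 + (-1/4 : ℂ) * A 0 1 * B 1 0 * ((Real.cos (θ / 2) : ℝ) : ℂ)^4 * Complex.exp (Complex.I * (φ:ℂ)) * Complex.exp (-(Complex.I * (φ:ℂ))) * (((Real.pi : ℝ) : ℂ))⁻¹ + (1/4 : ℂ) * A 0 1 * B 0 1 * Complex.exp (Complex.I * (φ:ℂ))^2 * (((Real.pi : ℝ) : ℂ))⁻¹ + (-1/4 : ℂ) * A 0 1 * B 0 1 * ((Real.sin (θ / 2) : ℝ) : ℂ)^4 * Complex.exp (Complex.I * (φ:ℂ))^2 * (((Real.pi : ℝ) : ℂ))⁻¹ + (-1/2 : ℂ) * A 0 1 * B 0 1 * ((Real.cos (θ / 2) : ℝ) : ℂ)^2 * ((Real.sin (θ / 2) : ℝ) : ℂ)^2 * Complex.exp (Complex.I * (φ:ℂ))^2 * (((Real.pi : ℝ) : ℂ))⁻¹ + (-1/4 : ℂ) * A 0 1 * B 0 1 * ((Real.cos (θ / 2) : ℝ) : ℂ)^4 * Complex.exp (Complex.I * (φ:ℂ))^2 * (((Real.pi : ℝ) : ℂ))⁻¹ + (-1/2 : ℂ) * A 0 1 * B 0 0 * ((Real.cos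 (θ / 2) : ℝ) : ℂ) * ((Real.sin (θ / 2) : ℝ) : ℂ)^3 * Complex.exp (Complex.I * (φ:ℂ)) * (((Real.pi : ℝ) : ℂ))⁻¹ + (-1/2 : ℂ) * A 0 1 * B 0 0 * ((Real.cos (θ / 2) : ℝ) : ℂ)^3 * ((Real.sin (θ / 2) : ℝ) : ℂ) * Complex.exp (Complex.I * (φ:ℂ)) * (((Real.pi : ℝ) : ℂ))⁻¹ + (-1/2 : ℂ) * A 0 0 * B 1 0 * ((Real.cos (θ / 2) : ℝ) : ℂ) * ((Real.sin (θ / 2) : ℝ) : ℂ)^3 * Complex.exp (-(Complex.I * (φ:ℂ))) * (((Real.pi : ℝ) : ℂ))⁻¹ + (-1/2 : ℂ) * A 0 0 * B 1 0 * ((Real.cos (θ / 2) : ℝ) : ℂ)^3 * ((Real.sin (θ / 2) : ℝ) : ℂ) * Complex.exp (-(Complex.I * (φ:ℂ))) * (((Real.pi : ℝ) : ℂ))⁻¹ + (-1/2 : ℂ) * A 0 0 * B 0 1 * ((Real.cos (θ / 2) : ℝ) : ℂ) * ((Real.sin (θ / 2) : ℝ) : ℂ)^3 * Complex.exp (Complex.I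 * (φ:ℂ)) * (((Real.pi : ℝ) : ℂ))⁻¹ + (-1/2 : ℂ) * A 0 0 * B 0 1 * ((Real.cos (θ / 2) : ℝ) : ℂ)^3 * ((Real.sin (θ / 2) : ℝ) : ℂ) * Complex.exp (Complex.I * (φ:ℂ)) * (((Real.pi : ℝ) : ℂ))⁻¹ + (-1 : ℂ) * A 0 0 * B 0 0 * ((Real.cos (θ / 2) : ℝ) : ℂ)^2 * ((Real.sin (θ / 2) : ℝ) : ℂ)^2 * (((Real.pi : ℝ) : ℂ))⁻¹ + (-1 : ℂ) * A 0 0 * B 0 0 * ((Real.cos (θ / 2) : ℝ) : ℂ)^4 * (((Real.pi : ℝ) : ℂ))⁻¹) * hpu +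
    ((-1 : ℂ) * A 1 1 * B 1 1 * ((Real.sin (θ / 2) : ℝ) : ℂ)^2 * (((Real.pi : ℝ) : ℂ))⁻¹ + (-1/2 : ℂ) * A 1 1 * B 1 0 * ((Real.cos (θ / 2) : ℝ) : ℂ) * ((Real.sin (θ / 2) : ℝ) : ℂ) * Complex.exp (-(Complex.I * (φ:ℂ))) * (((Real.pi : ℝ) : ℂ))⁻¹ + (-1/2 : ℂ) * A 1 1 * B 0 1 * ((Real.cos (θ / 2) : ℝ) : ℂ) * ((Real.sin (θ / 2) : ℝ) : ℂ) * Complex.exp (Complex.I * (φ:ℂ)) * (((Real.pi : ℝ) : ℂ))⁻¹ + (-1/2 : ℂ) * A 1 0 * B 1 1 * ((Real.cos (θ / 2) : ℝ) : ℂ) * ((Real.sin (θ / 2) : ℝ) : ℂ) * Complex.exp (-(Complex.I * (φ:ℂ))) * (((Real.pi : ℝ) : ℂ))⁻¹ + (-1/4 : ℂ) * A 1 0 * B 1 0 * Complex.exp (-(Complex.I * (φ:ℂ)))^2 * (((Real.pi : ℝ) : ℂ))⁻¹ + (-1/4 : ℂ) * A 1 0 * B 1 0 * ((Real.sin (θ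 / 2) : ℝ) : ℂ)^2 * Complex.exp (-(Complex.I * (φ:ℂ)))^2 * (((Real.pi : ℝ) : ℂ))⁻¹ + (-1/4 : ℂ) * A 1 0 * B 1 0 * ((Real.cos (θ / 2) : ℝ) : ℂ)^2 * Complex.exp (-(Complex.I * (φ:ℂ)))^2 * (((Real.pi : ℝ) : ℂ))⁻¹ + (1/2 : ℂ) * A 1 0 * B 0 1 * (((Real.pi : ℝ) : ℂ))⁻¹ + (-1/4 : ℂ) * A 1 0 * B 0 1 * Complex.exp (Complex.I * (φ:ℂ)) * Complex.exp (-(Complex.I * (φ:ℂ))) * (((Real.pi : ℝ) : ℂ))⁻¹ + (-1/4 : ℂ) * A 1 0 * B 0 1 * ((Real.sin (θ / 2) : ℝ) : ℂ)^2 * Complex.exp (Complex.I * (φ:ℂ)) * Complex.exp (-(Complex.I * (φ:ℂ))) * (((Real.pi : ℝ) : ℂ))⁻¹ + (-1/4 : ℂ) * A 1 0 * B 0 1 * ((Real.cos (θ / 2) : ℝ) : ℂ)^2 * Complex.exp (Complex.I * (φ:ℂ)) * Complex.exp (-(Complex.I * (φ:ℂ))) * (((Real.pi : ℝ) : ℂ))⁻¹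 + (-1/2 : ℂ) * A 1 0 * B 0 0 * ((Real.cos (θ / 2) : ℝ) : ℂ) * ((Real.sin (θ / 2) : ℝ) : ℂ) * Complex.exp (-(Complex.I * (φ:ℂ))) * (((Real.pi : ℝ) : ℂ))⁻¹ + (-1/2 : ℂ) * A 0 1 * B 1 1 * ((Real.cos (θ / 2) : ℝ) : ℂ) * ((Real.sin (θ / 2) : ℝ) : ℂ) * Complex.exp (Complex.I * (φ:ℂ)) * (((Real.pi : ℝ) : ℂ))⁻¹ + (1/2 : ℂ) * A 0 1 * B 1 0 * (((Real.pi : ℝ) : ℂ))⁻¹ + (-1/4 : ℂ) * A 0 1 * B 1 0 * Complex.exp (Complex.I * (φ:ℂ)) * Complex.exp (-(Complex.I * (φ:ℂ))) * (((Real.pi : ℝ) : ℂ))⁻¹ + (-1/4 : ℂ) * A 0 1 * B 1 0 * ((Real.sin (θ / 2) : ℝ) : ℂ)^2 * Complex.exp (Complex.I * (φ:ℂ)) * Complex.exp (-(Complex.I * (φ:ℂ))) * (((Real.pi : ℝ) : ℂ))⁻¹ + (-1/4 : ℂ) * A 0 1 * B 1 0 * ((Real.cos (θ / 2) : ℝ)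 : ℂ)^2 * Complex.exp (Complex.I * (φ:ℂ)) * Complex.exp (-(Complex.I * (φ:ℂ))) * (((Real.pi : ℝ) : ℂ))⁻¹ + (-1/4 : ℂ) * A 0 1 * B 0 1 * Complex.exp (Complex.I * (φ:ℂ))^2 * (((Real.pi : ℝ) : ℂ))⁻¹ + (-1/4 : ℂ) * A 0 1 * B 0 1 * ((Real.sin (θ / 2) : ℝ) : ℂ)^2 * Complex.exp (Complex.I * (φ:ℂ))^2 * (((Real.pi : ℝ) : ℂ))⁻¹ + (-1/4 : ℂ) * A 0 1 * B 0 1 * ((Real.cos (θ / 2) : ℝ) : ℂ)^2 * Complex.exp (Complex.I * (φ:ℂ))^2 * (((Real.pi : ℝ) : ℂ))⁻¹ + (-1/2 : ℂ) * A 0 1 * B 0 0 * ((Real.cos (θ / 2) : ℝ) : ℂ) * ((Real.sin (θ / 2) : ℝ) : ℂ) * Complex.exp (Complex.I * (φ:ℂ)) * (((Real.pi : ℝ) : ℂ))⁻¹ + (-1/2 : ℂ) * A 0 0 * B 1 0 * ((Real.cos (θ / 2) : ℝ) : ℂ) * ((Real.sin (θ / 2) : ℝ) : ℂ) * Complex.exp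 (-(Complex.I * (φ:ℂ))) * (((Real.pi : ℝ) : ℂ))⁻¹ + (-1/2 : ℂ) * A 0 0 * B 0 1 * ((Real.cos (θ / 2) : ℝ) : ℂ) * ((Real.sin (θ / 2) : ℝ) : ℂ) * Complex.exp (Complex.I * (φ:ℂ)) * (((Real.pi : ℝ) : ℂ))⁻¹ + (-1 : ℂ) * A 0 0 * B 0 0 * ((Real.cos (θ / 2) : ℝ) : ℂ)^2 * (((Real.pi : ℝ) : ℂ))⁻¹) * hcs +
    ((-1/2 : ℂ) * A 1 0 * B 0 1 * (((Real.pi : ℝ) : ℂ))⁻¹ + (-1/2 : ℂ) * A 0 1 * B 1 0 * (((Real.pi : ℝ) : ℂ))⁻¹) * hEF
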